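/- In the category of sets, a morphism f : X → Y has all fibers of cardinality less than κ (where κ is a regular uncountable cardinal, or any infinite regular cardinal) if and only if f is relatively κ-compact, i.e., for every κ-compact set Z and map g : Z → Y, the pullback Z ×_Y X is κ-compact. -/

import Mathlib

open CategoryTheory CategoryTheory.Limits

universe w v u

/-- A category `J` is `κ`-filtered if every diagram in `J` indexed by a category
with fewer than `κ` morphisms admits a cocone. -/
def IsCardFiltered (κ : Cardinal.{w}) (J : Type w) [SmallCategory J] : Prop :=
  ∀ (K : Type w) [SmallCategory K], Cardinal.mk (Σ a b : K, a ⟶ b) < κ →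
    ∀ F : K ⥤ J, Nonempty (Cocone F)

/-- An object `X` is `κ`-compact if `Hom(X, −)` preserves `κ`-filtered colimits. -/
def IsKappaCompact (κ : Cardinal.{w}) {E : Type u} [Category.{v} E] (X : E) : Prop :=
  ∀ (J : Type w) [SmallCategory J], IsCardFiltered κ J →
    ∀ (F : J ⥤ E) (c : Cocone F), Nonempty (IsColimit c) →
      Nonempty (IsColimit ((coyoneda.obj (Opposite.op X)).mapCocone c))

/-- A morphism `f : X ⟶ Y` is relatively `κ`-compact if its pullback along any map
from a `κ`-compact object is `κ`-compact. -/
def RelKappaCompact (κ : Cardinal.{w}) {E : Type u} [Category.{v} E] {X Y : E}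
    (f : X ⟶ Y) : Prop :=
  ∀ (Z : E) (g : Z ⟶ Y), IsKappaCompact.{w} κ Z →
    ∀ (P : E) (fst : P ⟶ X) (snd : P ⟶ Z), IsPullback fst snd f g →
      IsKappaCompact.{w} κ P

namespace KappaAux

/-- The "wide parallel pair" shape: one source and a family of sinks, with two
parallel arrows from the source to each sink. -/
inductive WP (Z : Type u) : Type u
  | src : WP Z
  | sink : Z → WP Z

/-- Hom types for `WP`. -/
abbrev WPHom {Z : Type u} : WP Z → WP Z → Type u
  | .src, .src => PUnit
  | .src, .sink _ => ULift Bool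
  | .sink _, .src => PEmpty
  | .sink z, .sink z' => ULift (PLift (z = z'))

instance (Z : Type u) : SmallCategory (WP Z) where
  Hom := WPHom
  id a := match a with
    | .src => PUnit.unit
    | .sink _ => ULift.up (PLift.up rfl)
  comp {a b c} f g := match a, b, c, f, g with
    | .src, .src, .src, _, _ => PUnit.unit
    | .src, .src, .sink _, _, g => g
    | .src, .sink _, .sink _, f, _ => f
    | .sink _, .sink _, .sink _, f, g => ULift.up (PLift.up (f.down.down.trans g.down.down))
    | .src, .sink _, .src, _, g => PEmpty.elim g
    | .sink _, .sink _, .src, _, g => PEmpty.elim g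
    | .sink _, .src, _, f, _ => PEmpty.elim f
  id_comp {a b} f := by
    cases a <;> cases b <;> first | rfl | exact PEmpty.elim f
  comp_id {a b} f := by
    cases a <;> cases b <;> first | rfl | exact PEmpty.elim f
  assoc {a b c d} f g h := by
    cases a <;> cases b <;> cases c <;> cases d <;>
      first
        | rfl
        | exact PEmpty.elim f
        | exact PEmpty.elim g
        | exact PEmpty.elim h

/-- The functor out of `WP Z` given by a source object, sink objects and two
families of parallel arrows. -/
def WPFunctor {Z : Type u} {J : Type u} [SmallCategory J] (i : J) (k : Z → J)
    (u v : ∀ z, i ⟶ k z) : WP Z ⥤ J where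
  obj a := match a with
    | .src => i
    | .sink z => k z
  map {a b} f := match a, b, f with
    | .src, .src, _ => 𝟙 i
    | .src, .sink z, ⟨true⟩ => u z
    | .src, .sink z, ⟨false⟩ => v z
    | .sink z, .sink _, ⟨⟨h⟩⟩ => eqToHom (congrArg k h)
    | .sink _, .src, f => PEmpty.elim f
  map_id a := by cases a <;> rfl
  map_comp {a b c} f g := by
    rcases a with _ | za <;> rcases b with _ | zb <;> rcases c with _ | zc <;>
      first
        | exact PEmpty.elim f
        | exact PEmpty.elim g
        | skip
    · exact (Category.id_comp _).symm
    · exact (Category.id_comp _).symm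
    · -- src, sink zb, sink zc
      have h : zb = zc := (ULift.down (α := PLift (zb = zc)) g).down
      subst h
      exact (Category.comp_id _).symm
    · -- sink za, sink zb, sink zc
      have h1 : za = zb := (ULift.down (α := PLift (za = zb)) f).down
      subst h1
      have h2 : za = zc := (ULift.down (α := PLift (za = zc)) g).down
      subst h2
      exact (Category.id_comp _).symm

open Cardinal in
lemma mk_arrows_lt_of_thin {κ : Cardinal.{u}} (hκ : κ.IsRegular) {K : Type u} [SmallCategory K]
    (hsub : ∀ a b : K, Subsingleton (a ⟶ b)) (hK : #K < κ) :
    #(Σ a b : K, a ⟶ b) < κ := by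
  have hinj : Function.Injective (fun x : Σ a b : K, a ⟶ b => (x.1, x.2.1)) := by
    rintro ⟨a, b, f⟩ ⟨a', b', f'⟩ h
    obtain rfl : a = a' := congrArg Prod.fst h
    obtain rfl : b = b' := congrArg Prod.snd h
    obtain rfl : f = f' := @Subsingleton.elim _ (hsub a b) f f'
    rfl
  calc #(Σ a b : K, a ⟶ b) ≤ #(K × K) := Cardinal.mk_le_of_injective hinj
    _ = #K * #K := by simp [Cardinal.mk_prod]
    _ < κ := Cardinal.mul_lt_of_lt hκ.aleph0_le hK hK

open Cardinal in
lemma mk_arrows_discrete_lt {κ : Cardinal.{u}} (hκ : κ.IsRegular) {A : Type u} (hA : #A < κ) :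
    #(Σ a b : Discrete A, a ⟶ b) < κ :=
  mk_arrows_lt_of_thin hκ (fun _ _ => inferInstance)
    (by rwa [Cardinal.mk_congr (CategoryTheory.discreteEquiv)])

/-- Encoding of the homs of `WP Z` by a boolean. -/
def encHom {Z : Type u} : ∀ a b : WP Z, WPHom a b → ULift.{u} Bool
  | .src, .sink _, f => f
  | .src, .src, _ => ⟨false⟩
  | .sink _, .src, _ => ⟨false⟩
  | .sink _, .sink _, _ => ⟨false⟩

open Cardinal in
lemma mk_wp_arrows_lt {κ : Cardinal.{u}} (hκ : κ.IsRegular) {Z : Type u} (hZ : #Z < κ) :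
    #(Σ a b : WP Z, a ⟶ b) < κ := by
  have hinj : Function.Injective (fun x : Σ a b : WP Z, a ⟶ b =>
      (x.1, x.2.1, encHom x.1 x.2.1 x.2.2)) := by
    rintro ⟨a, b, f⟩ ⟨a', b', f'⟩ h
    obtain rfl : a = a' := congrArg Prod.fst h
    obtain rfl : b = b' := congrArg (fun p : WP Z × WP Z × ULift.{u} Bool => p.2.1) h
    have h3 : encHom a b f = encHom a b f' :=
      congrArg (fun p : WP Z × WP Z × ULift.{u} Bool => p.2.2) h
    rcases a with _ | za <;> rcases b with _ | zb
    · rfl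
    · obtain rfl : f = f' := h3
      rfl
    · exact PEmpty.elim f
    · have hf : f = f' := @Subsingleton.elim (ULift (PLift (za = zb))) inferInstance f f'
      cases hf
      rfl
  have hwp : #(WP Z) < κ := by
    have e : WP Z ≃ Option Z :=
      { toFun := fun a => match a with | .src => none | .sink z => some z
        invFun := fun o => match o with | none => .src | some z => .sink z
        left_inv := fun a => by cases a <;> rfl
        right_inv := fun o => by cases o <;> rfl }
    rw [Cardinal.mk_congr e, Cardinal.mk_option]
    exact Cardinal.add_lt_of_lt hκ.aleph0_le hZ
      (lt_of_lt_of_le Cardinal.one_lt_aleph0 hκ.aleph0_le)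
  have hbool : #(ULift.{u} Bool) < κ :=
    lt_of_lt_of_le (Cardinal.mk_lt_aleph0_iff.mpr inferInstance) hκ.aleph0_le
  calc #(Σ a b : WP Z, a ⟶ b) ≤ #(WP Z × WP Z × ULift.{u} Bool) :=
        Cardinal.mk_le_of_injective hinj
    _ = #(WP Z) * (#(WP Z) * #(ULift.{u} Bool)) := by
        rw [Cardinal.mk_prod, Cardinal.mk_prod]
        simp [Cardinal.lift_id]
    _ < κ := Cardinal.mul_lt_of_lt hκ.aleph0_le hwp
        (Cardinal.mul_lt_of_lt hκ.aleph0_le hwp hbool)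

open Cardinal in
lemma isFiltered_of_card {κ : Cardinal.{u}} (hκ : κ.IsRegular) {J : Type u}
    [SmallCategory J] (hJ : IsCardFiltered κ J) : IsFiltered J := by
  have hne : Nonempty J := by
    obtain ⟨cc⟩ := hJ (Discrete PEmpty.{u + 1})
      (mk_arrows_discrete_lt hκ
        (by rw [Cardinal.mk_eq_zero]; exact lt_of_lt_of_le Cardinal.aleph0_pos hκ.aleph0_le))
      (Functor.empty J)
    exact ⟨cc.pt⟩
  have hfoe : IsFilteredOrEmpty J := by
    constructor
    · intro i j
      obtain ⟨cc⟩ := hJ (Discrete (ULift.{u} Bool))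
        (mk_arrows_discrete_lt hκ
          (lt_of_lt_of_le (Cardinal.mk_lt_aleph0_iff.mpr inferInstance) hκ.aleph0_le))
        (Discrete.functor fun b => cond b.down i j)
      exact ⟨cc.pt, cc.ι.app ⟨ULift.up true⟩, cc.ι.app ⟨ULift.up false⟩, trivial⟩
    · intro i j f g
      obtain ⟨cc⟩ := hJ (WP PUnit.{u + 1})
        (mk_wp_arrows_lt hκ
          (by rw [Cardinal.mk_punit]; exact lt_of_lt_of_le Cardinal.one_lt_aleph0 hκ.aleph0_le))
        (WPFunctor i (fun _ => j) (fun _ => f) (fun _ => g))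
      refine ⟨cc.pt, cc.ι.app (WP.sink PUnit.unit), ?_⟩
      have h1 : f ≫ cc.ι.app (WP.sink PUnit.unit) = cc.ι.app WP.src :=
        cc.w (show (WP.src : WP PUnit.{u + 1}) ⟶ WP.sink PUnit.unit from ULift.up true)
      have h2 : g ≫ cc.ι.app (WP.sink PUnit.unit) = cc.ι.app WP.src :=
        cc.w (show (WP.src : WP PUnit.{u + 1}) ⟶ WP.sink PUnit.unit from ULift.up false)
      exact h1.trans h2.symm
  exact @IsFiltered.mk _ _ hfoe hne

open Cardinal in
lemma compact_of_lt {κ : Cardinal.{u}} (hκ : κ.IsRegular) {Z : Type u} (hZ : #Z < κ) :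
    IsKappaCompact.{u} κ Z := by
  intro J _ hJ F c hc'
  obtain ⟨hc⟩ := hc'
  haveI : IsFiltered J := isFiltered_of_card hκ hJ
  haveI : HasColimit F := HasColimit.mk ⟨c, hc⟩
  refine ⟨Types.FilteredColimit.isColimitOf _ _ ?_ ?_⟩
  · -- joint surjectivity
    intro (h : Z ⟶ c.pt)
    choose jf xf hx using fun z => Types.jointly_surjective F hc (h z)
    obtain ⟨cc⟩ := hJ (Discrete Z) (mk_arrows_discrete_lt hκ hZ) (Discrete.functor jf)
    refine ⟨cc.pt, TypeCat.ofHom fun z => F.map (cc.ι.app ⟨z⟩) (xf z), ?_⟩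
    change (h : Z ⟶ c.pt) = (_ : Z ⟶ c.pt)
    ext z
    show h z = c.ι.app cc.pt (F.map (cc.ι.app ⟨z⟩) (xf z))
    have h2 := types_congr_hom (c.w (cc.ι.app ⟨z⟩)) (xf z)
    exact (h2.trans (hx z)).symm
  · -- joint injectivity
    intro i j (gi : Z ⟶ F.obj i) (gj : Z ⟶ F.obj j) hgij
    have key : ∀ z : Z, ∃ (k : J) (u : IsFiltered.max i j ⟶ k) (v : IsFiltered.max i j ⟶ k),
        F.map u (F.map (IsFiltered.leftToMax i j) (gi z)) =
          F.map v (F.map (IsFiltered.rightToMax i j) (gj z)) := by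
      intro z
      have e1 : c.ι.app _ (F.map (IsFiltered.leftToMax i j) (gi z)) =
          c.ι.app _ (F.map (IsFiltered.rightToMax i j) (gj z)) := by
        have hpz := types_congr_hom (c.w (IsFiltered.leftToMax i j)) (gi z)
        have hqz := types_congr_hom (c.w (IsFiltered.rightToMax i j)) (gj z)
        have hz : c.ι.app i (gi z) = c.ι.app j (gj z) := types_congr_hom hgij z
        exact hpz.trans (hz.trans hqz.symm)
      exact (Types.FilteredColimit.isColimit_eq_iff F hc).mp e1
    choose k uu vv hk using key
    obtain ⟨cc⟩ := hJ (WP Z) (mk_wp_arrows_lt hκ hZ)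
      (WPFunctor (IsFiltered.max i j) k uu vv)
    refine ⟨cc.pt, IsFiltered.leftToMax i j ≫ cc.ι.app WP.src,
      IsFiltered.rightToMax i j ≫ cc.ι.app WP.src, ?_⟩
    change (_ : Z ⟶ F.obj cc.pt) = _
    ext z
    show F.map (IsFiltered.leftToMax i j ≫ cc.ι.app WP.src) (gi z) =
      F.map (IsFiltered.rightToMax i j ≫ cc.ι.app WP.src) (gj z)
    have e1 : uu z ≫ cc.ι.app (WP.sink z) = cc.ι.app WP.src :=
      cc.w (show (WP.src : WP Z) ⟶ WP.sink z from ULift.up true)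
    have e2 : vv z ≫ cc.ι.app (WP.sink z) = cc.ι.app WP.src :=
      cc.w (show (WP.src : WP Z) ⟶ WP.sink z from ULift.up false)
    calc F.map (IsFiltered.leftToMax i j ≫ cc.ι.app WP.src) (gi z)
        = F.map (cc.ι.app (WP.sink z))
            (F.map (uu z) (F.map (IsFiltered.leftToMax i j) (gi z))) := by
          rw [← e1]; simp [FunctorToTypes.map_comp_apply]
          exact FunctorToTypes.map_comp_apply F _ _ _
      _ = F.map (cc.ι.app (WP.sink z))
            (F.map (vv z) (F.map (IsFiltered.rightToMax i j) (gj z))) := by rw [hk z]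
      _ = F.map (IsFiltered.rightToMax i j ≫ cc.ι.app WP.src) (gj z) := by
          rw [← e2]; simp [FunctorToTypes.map_comp_apply]
          exact (FunctorToTypes.map_comp_apply F _ _ _).symm

open Cardinal in
lemma lt_of_compact {κ : Cardinal.{u}} (hκ : κ.IsRegular) {Z : Type u}
    (h : IsKappaCompact.{u} κ Z) : #Z < κ := by
  let J := {S : Set Z // #S < κ}
  have hJ : IsCardFiltered κ J := by
    intro K _ hK Fk
    have hKcard : #K < κ := by
      refine lt_of_le_of_lt (Cardinal.mk_le_of_injective
        (f := fun a : K => (⟨a, a, 𝟙 a⟩ : Σ a b : K, a ⟶ b)) ?_) hK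
      intro a b hab
      exact congrArg Sigma.fst hab
    have hU : #(⋃ k : K, ((Fk.obj k : J) : Set Z)) < κ :=
      lt_of_le_of_lt Cardinal.mk_iUnion_le_sum_mk
        (Cardinal.sum_lt_of_isRegular hκ hKcard (fun k => (Fk.obj k).2))
    refine ⟨{ pt := ⟨_, hU⟩, ι := { app := fun kk => homOfLE ?_, naturality := ?_ } }⟩
    · exact Set.subset_iUnion (fun kk : K => ((Fk.obj kk : J) : Set Z)) kk
    · intro a b φ
      exact Subsingleton.elim _ _
  let D : J ⥤ Type u :=
    { obj := fun S => ↥(S : Set Z)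
      map := fun {S T} φ => TypeCat.ofHom fun x => ⟨x.1, leOfHom φ x.2⟩
      map_id := fun S => rfl
      map_comp := fun _ _ => rfl }
  let c : Cocone D :=
    { pt := Z
      ι := { app := fun S => TypeCat.ofHom fun x => x.1, naturality := fun S T φ => rfl } }
  have hsing : ∀ z : Z, #({z} : Set Z) < κ := fun z => by
    rw [Cardinal.mk_singleton]
    exact lt_of_lt_of_le Cardinal.one_lt_aleph0 hκ.aleph0_le
  have hc : IsColimit c :=
    { desc := fun t => TypeCat.ofHom fun z => t.ι.app ⟨{z}, hsing z⟩ ⟨z, rfl⟩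
      fac := fun t S => by
        ext x
        have φ : (⟨{x.1}, hsing x.1⟩ : J) ⟶ S :=
          homOfLE (show ({x.1} : Set Z) ⊆ (S : Set Z) from Set.singleton_subset_iff.mpr x.2)
        have h2 := types_congr_hom (t.w φ) ⟨x.1, rfl⟩
        exact h2.symm
      uniq := fun t m hm => by
        ext z
        exact types_congr_hom (hm ⟨{z}, hsing z⟩) ⟨z, rfl⟩ }
  obtain ⟨hco⟩ := h J hJ D c ⟨hc⟩
  obtain ⟨S, (gS : Z ⟶ ((S : Set Z) : Type u)), hgS⟩ := Types.jointly_surjective _ hco (𝟙 Z)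
  have hli : Function.LeftInverse (fun x : ↥(S : Set Z) => (x : Z)) gS :=
    fun z => types_congr_hom hgS z
  have hinj : Function.Injective gS := hli.injective
  exact lt_of_le_of_lt (Cardinal.mk_le_of_injective hinj) S.2

end KappaAux

/-- In `Set`, a map has all fibers of cardinality `< κ` (κ an infinite regular cardinal)
iff it is relatively `κ`-compact. -/
theorem fibers_small_iff_relatively_kappaCompact
    (κ : Cardinal.{u}) (hκ : κ.IsRegular) {X Y : Type u} (f : X ⟶ Y) :
    (∀ y : Y, Cardinal.mk {x : X // f x = y} < κ) ↔ RelKappaCompact.{u} κ f := by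
  constructor
  · intro hfib Z g hZc P fst snd hpb
    have hZ : Cardinal.mk Z < κ := KappaAux.lt_of_compact hκ hZc
    apply KappaAux.compact_of_lt hκ
    have hinj : Function.Injective (fun w : P =>
        (⟨snd w, fst w, types_congr_hom hpb.w w⟩ : Σ z : Z, {x : X // f x = g z})) := by
      intro w w' hww
      have h1 : snd w = snd w' := congrArg Sigma.fst hww
      have h2 : fst w = fst w' :=
        congrArg (fun s : Σ z : Z, {x : X // f x = g z} => (s.2 : X)) hww
      have h3 := PullbackCone.IsLimit.hom_ext hpb.isLimit (W := PUnit.{u + 1})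
        (k := TypeCat.ofHom fun _ => w) (l := TypeCat.ofHom fun _ => w') (by ext; exact h2) (by ext; exact h1)
      exact types_congr_hom h3 PUnit.unit
    refine lt_of_le_of_lt (Cardinal.mk_le_of_injective hinj) ?_
    rw [Cardinal.mk_sigma]
    exact Cardinal.sum_lt_of_isRegular hκ hZ (fun z => hfib (g z))
  · intro hrel y
    have hpt : IsKappaCompact.{u} κ PUnit.{u + 1} := by
      apply KappaAux.compact_of_lt hκ
      rw [Cardinal.mk_punit]
      exact lt_of_lt_of_le Cardinal.one_lt_aleph0 hκ.aleph0_le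
    let g : PUnit.{u + 1} ⟶ Y := TypeCat.ofHom fun _ => y
    let fst' : {x : X // f x = y} ⟶ X := TypeCat.ofHom Subtype.val
    let snd' : {x : X // f x = y} ⟶ PUnit.{u + 1} := TypeCat.ofHom fun _ => PUnit.unit
    have comm : fst' ≫ f = snd' ≫ g := by ext x; exact x.2
    have lim : IsLimit (PullbackCone.mk fst' snd' comm) :=
      PullbackCone.IsLimit.mk comm
        (fun s => TypeCat.ofHom fun a => ⟨s.fst a, types_congr_hom s.condition a⟩)
        (fun s => rfl)
        (fun s => rfl)
        (fun s m hm1 _ => by ext a; exact types_congr_hom hm1 a)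
    have hpb : IsPullback fst' snd' f g := ⟨⟨comm⟩, ⟨lim⟩⟩
    exact KappaAux.lt_of_compact hκ (hrel PUnit.{u + 1} g hpt _ fst' snd' hpb)
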